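/- Let n ≥ 2 and θ ∈ ℝ. For every four times continuously differentiable function u on 𝔹, Δ(L_θ[u]) = L_{θ-1}[Δu] on 𝔹. More generally, for every j ∈ ℕ (j ≥ 1) and every (2j+2)-times continuously differentiable u on 𝔹, Δ^j(L_θ[u]) = L_{θ-j}[Δ^j u] on 𝔹. -/

import Mathlib

open MeasureTheory
open scoped BigOperators ENNReal Classical

noncomputable section

/-- Euclidean space `ℝⁿ`. -/
abbrev E (n : ℕ) := EuclideanSpace ℝ (Fin n)

/-- The open unit ball of `ℝⁿ`. -/
def unitBall (n : ℕ) : Set (E n) := Metric.ball 0 1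

/-- The Laplacian `Δf = ∑ ∂²f/∂xᵢ²`. -/
def lap {n : ℕ} (f : E n → ℂ) (x : E n) : ℂ :=
  ∑ i : Fin n,
    fderiv ℝ (fun y => fderiv ℝ f y (EuclideanSpace.single i 1)) x (EuclideanSpace.single i 1)

/-- The `N`-th iterate `Δ^N` of the Laplacian. -/
def lapIter {n : ℕ} (N : ℕ) (f : E n → ℂ) : E n → ℂ := lap^[N] f

/-- The radial derivative `R[u](x) = x ⋅ ∇u(x)`. -/
def radialDeriv {n : ℕ} (f : E n → ℂ) (x : E n) : ℂ := fderiv ℝ f x x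

/-- The operator `L_θ[u] = (1-|x|²) Δu + 4θ R[u] + 2θ(n-2-2θ) u`. -/
def Lop {n : ℕ} (θ : ℝ) (f : E n → ℂ) (x : E n) : ℂ :=
  ((1 - ‖x‖ ^ 2 : ℝ) : ℂ) * lap f x + ((4 * θ : ℝ) : ℂ) * radialDeriv f x
    + ((2 * θ * ((n : ℝ) - 2 - 2 * θ) : ℝ) : ℂ) * f x

/-- The multiplication operator `M^j[u](x) = (1-|x|²)^j u(x)` for integer `j`. -/
def Mnat {n : ℕ} (j : ℕ) (f : E n → ℂ) (x : E n) : ℂ :=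
  (((1 - ‖x‖ ^ 2) ^ j : ℝ) : ℂ) * f x

/-- The multiplication operator `M^λ[u](x) = (1-|x|²)^λ u(x)` for real `λ`. -/
def Mr {n : ℕ} (lam : ℝ) (f : E n → ℂ) (x : E n) : ℂ :=
  (((1 - ‖x‖ ^ 2) ^ lam : ℝ) : ℂ) * f x

/-- `u` is `N`-harmonic on the unit ball: `u` is `C^{2N}` there and `Δ^N u = 0`. -/
def NHarm (n N : ℕ) (u : E n → ℂ) : Prop :=
  ContDiffOn ℝ (2 * N : ℕ) u (unitBall n) ∧ ∀ x ∈ unitBall n, lapIter N u x = 0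

/-- `‖u‖_{p,α}^p = ∫_𝔹 |u|^p (1-|x|²)^α dV`, as a lower integral. -/
def wInt (n : ℕ) (p α : ℝ) (u : E n → ℂ) : ℝ≥0∞ :=
  ∫⁻ x in unitBall n, ENNReal.ofReal (‖u x‖ ^ p * (1 - ‖x‖ ^ 2) ^ α)

/-- Membership in `PH^p_{N,α}(𝔹)`. -/
def memPH (n N : ℕ) (p α : ℝ) (u : E n → ℂ) : Prop :=
  NHarm n N u ∧ wInt n p α u < ⊤

/-- The quantities `b_{j,N}(p)`. -/
def bCoef (n N j : ℕ) (p : ℝ) : ℝ :=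
  if j = 0 then -1 - ((N : ℝ) - 1) * p
  else max (-1 - ((N : ℝ) + (j : ℝ) - 1) * p) (-(n : ℝ) - ((N : ℝ) - (j : ℝ) - (n : ℝ) + 1) * p)

/-- The quantities `a_{j,N}(p)`. -/
def aCoef (n N j : ℕ) (p : ℝ) : ℝ :=
  min (bCoef n N j p) (-1 - ((N : ℝ) - (j : ℝ)) * p)

end

noncomputable section
open Filter Topology
namespace S6
variable {n : ℕ}

lemma sum_single (x : E n) : ∑ i, (x i) • (EuclideanSpace.single i (1:ℝ)) = x := by
  have h := (EuclideanSpace.basisFun (Fin n) ℝ).sum_repr x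
  simpa [EuclideanSpace.basisFun_apply, EuclideanSpace.basisFun_repr] using h

lemma clm_apply_eq_sum (L : E n →L[ℝ] ℂ) (x : E n) :
    L x = ∑ i, ((x i : ℝ) : ℂ) * L ((EuclideanSpace.single i (1:ℝ))) := by
  conv_lhs => rw [← sum_single x]
  rw [map_sum]
  simp [Complex.real_smul]

lemma contDiffOn_D {f : E n → ℂ} {s : Set (E n)} {m : ℕ} (hs : IsOpen s)
    (hf : ContDiffOn ℝ (m + 1 : ℕ) f s) (v : E n) :
    ContDiffOn ℝ m (fun x => fderiv ℝ f x v) s := by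
  have h := hf.fderiv_of_isOpen hs (m := m) (by exact_mod_cast le_rfl)
  exact h.clm_apply contDiffOn_const

lemma contDiffOn_lap {f : E n → ℂ} {s : Set (E n)} {m : ℕ} (hs : IsOpen s)
    (hf : ContDiffOn ℝ (m + 2 : ℕ) f s) : ContDiffOn ℝ m (lap f) s := by
  have : ∀ i : Fin n, ContDiffOn ℝ m
      (fun x => fderiv ℝ (fun y => fderiv ℝ f y (EuclideanSpace.single i 1)) x
        (EuclideanSpace.single i 1)) s := by
    intro i
    refine contDiffOn_D hs (contDiffOn_D (m := m + 1) hs ?_ _) _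
    exact_mod_cast hf
  exact ContDiffOn.sum fun i _ => this i

lemma contDiffOn_radial {f : E n → ℂ} {s : Set (E n)} {m : ℕ} (hs : IsOpen s)
    (hf : ContDiffOn ℝ (m + 1 : ℕ) f s) : ContDiffOn ℝ m (radialDeriv f) s := by
  have h := hf.fderiv_of_isOpen hs (m := m) (by exact_mod_cast le_rfl)
  exact h.clm_apply contDiffOn_id

lemma diffAt_of_contDiffOn {f : E n → ℂ} {s : Set (E n)} {x : E n} {m : ℕ} (hs : IsOpen s)
    (hx : x ∈ s) (hf : ContDiffOn ℝ (m + 1 : ℕ) f s) : DifferentiableAt ℝ f x := by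
  have : (1 : WithTop ℕ∞) ≤ (m + 1 : ℕ) := by exact_mod_cast Nat.le_add_left 1 m
  exact ((hf.of_le this).differentiableOn one_ne_zero).differentiableAt (hs.mem_nhds hx)

lemma lap_congr_nhds {f g : E n → ℂ} {x : E n} (h : f =ᶠ[𝓝 x] g) : lap f x = lap g x := by
  unfold lap
  refine Finset.sum_congr rfl fun i _ => ?_
  have h1 : (fun y => fderiv ℝ f y (EuclideanSpace.single i 1)) =ᶠ[𝓝 x]
      (fun y => fderiv ℝ g y (EuclideanSpace.single i 1)) := by
    filter_upwards [h.fderiv (𝕜 := ℝ)] with y hy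
    rw [hy]
  rw [h1.fderiv_eq]

lemma diffAt_D {f : E n → ℂ} {s : Set (E n)} {x : E n} {m : ℕ} (hs : IsOpen s)
    (hx : x ∈ s) (hf : ContDiffOn ℝ (m + 2 : ℕ) f s) (v : E n) :
    DifferentiableAt ℝ (fun y => fderiv ℝ f y v) x := by
  refine diffAt_of_contDiffOn (m := m) hs hx ?_
  exact contDiffOn_D (m := m + 1) hs (by exact_mod_cast hf) v

lemma lap_sum {ι : Type*} {t : Finset ι} {g : ι → E n → ℂ} {s : Set (E n)} {x : E n}
    (hs : IsOpen s) (hx : x ∈ s) (hg : ∀ k ∈ t, ContDiffOn ℝ 2 (g k) s) :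
    lap (fun y => ∑ k ∈ t, g k y) x = ∑ k ∈ t, lap (g k) x := by
  have h2 : ∀ k ∈ t, ContDiffOn ℝ (0 + 2 : ℕ) (g k) s := by
    intro k hk; exact_mod_cast hg k hk
  unfold lap
  rw [Finset.sum_comm]
  refine Finset.sum_congr rfl fun i _ => ?_
  set v := EuclideanSpace.single i (1:ℝ) with hv
  have h1 : (fun y => fderiv ℝ (fun z => ∑ k ∈ t, g k z) y v) =ᶠ[𝓝 x]
      (fun y => ∑ k ∈ t, fderiv ℝ (g k) y v) := by
    filter_upwards [hs.mem_nhds hx] with y hy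
    rw [fderiv_fun_sum fun k hk => diffAt_of_contDiffOn (m := 1) hs hy (by exact_mod_cast hg k hk)]
    simp
  rw [h1.fderiv_eq, fderiv_fun_sum fun k hk => diffAt_D (m := 0) hs hx (h2 k hk) v]
  simp

lemma lap_add {f g : E n → ℂ} {s : Set (E n)} {x : E n} (hs : IsOpen s) (hx : x ∈ s)
    (hf : ContDiffOn ℝ 2 f s) (hg : ContDiffOn ℝ 2 g s) :
    lap (fun y => f y + g y) x = lap f x + lap g x := by
  have h := lap_sum (t := ({0, 1} : Finset (Fin 2)))
      (g := fun k => if k = 0 then f else g) hs hx ?_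
  · simpa using h
  · intro k _
    by_cases h0 : k = 0 <;> simp [h0, hf, hg]

lemma lap_const_mul {f : E n → ℂ} {s : Set (E n)} {x : E n} (c : ℂ) (hs : IsOpen s) (hx : x ∈ s)
    (hf : ContDiffOn ℝ 2 f s) :
    lap (fun y => c * f y) x = c * lap f x := by
  have h2 : ContDiffOn ℝ (0 + 2 : ℕ) f s := by exact_mod_cast hf
  unfold lap
  rw [Finset.mul_sum]
  refine Finset.sum_congr rfl fun i _ => ?_
  set v := EuclideanSpace.single i (1:ℝ) with hv
  have h1 : (fun y => fderiv ℝ (fun z => c * f z) y v) =ᶠ[𝓝 x]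
      (fun y => c * fderiv ℝ f y v) := by
    filter_upwards [hs.mem_nhds hx] with y hy
    rw [fderiv_const_mul (diffAt_of_contDiffOn (m := 1) hs hy (by exact_mod_cast hf)) c]
    simp
  rw [h1.fderiv_eq, fderiv_const_mul (diffAt_D (m := 0) hs hx h2 v) c]
  simp

lemma lap_mul {f g : E n → ℂ} {s : Set (E n)} {x : E n} (hs : IsOpen s) (hx : x ∈ s)
    (hf : ContDiffOn ℝ 2 f s) (hg : ContDiffOn ℝ 2 g s) :
    lap (fun y => f y * g y) x =
      f x * lap g x
        + 2 * ∑ i, fderiv ℝ f x (EuclideanSpace.single i 1)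
            * fderiv ℝ g x (EuclideanSpace.single i 1)
        + g x * lap f x := by
  have hf2 : ContDiffOn ℝ (0 + 2 : ℕ) f s := by exact_mod_cast hf
  have hg2 : ContDiffOn ℝ (0 + 2 : ℕ) g s := by exact_mod_cast hg
  unfold lap
  rw [Finset.mul_sum, Finset.mul_sum, Finset.mul_sum, ← Finset.sum_add_distrib,
    ← Finset.sum_add_distrib]
  refine Finset.sum_congr rfl fun i _ => ?_
  set v := EuclideanSpace.single i (1:ℝ) with hv
  have hfd : ∀ y ∈ s, DifferentiableAt ℝ f y := fun y hy =>
    diffAt_of_contDiffOn (m := 1) hs hy (by exact_mod_cast hf)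
  have hgd : ∀ y ∈ s, DifferentiableAt ℝ g y := fun y hy =>
    diffAt_of_contDiffOn (m := 1) hs hy (by exact_mod_cast hg)
  have h1 : (fun y => fderiv ℝ (fun z => f z * g z) y v) =ᶠ[𝓝 x]
      (fun y => f y * fderiv ℝ g y v + g y * fderiv ℝ f y v) := by
    filter_upwards [hs.mem_nhds hx] with y hy
    rw [fderiv_fun_mul (hfd y hy) (hgd y hy)]
    simp [smul_eq_mul]
  rw [h1.fderiv_eq]
  have hDf : DifferentiableAt ℝ (fun y => fderiv ℝ f y v) x := diffAt_D (m := 0) hs hx hf2 v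
  have hDg : DifferentiableAt ℝ (fun y => fderiv ℝ g y v) x := diffAt_D (m := 0) hs hx hg2 v
  rw [fderiv_fun_add ((hfd x hx).fun_mul hDg) ((hgd x hx).fun_mul hDf)]
  rw [ContinuousLinearMap.add_apply,
    fderiv_fun_mul (hfd x hx) hDg, fderiv_fun_mul (hgd x hx) hDf]
  simp only [ContinuousLinearMap.add_apply, ContinuousLinearMap.smul_apply, smul_eq_mul]
  ring

lemma D_comm {f : E n → ℂ} {x : E n} (hf : ContDiffAt ℝ 2 f x) (v w : E n) :
    fderiv ℝ (fun y => fderiv ℝ f y v) x w = fderiv ℝ (fun y => fderiv ℝ f y w) x v := by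
  have hsymm : IsSymmSndFDerivAt ℝ f x := hf.isSymmSndFDerivAt (by simp [minSmoothness_of_isRCLikeNormedField])
  have hdiff : DifferentiableAt ℝ (fderiv ℝ f) x := by
    have h1 : ContDiffAt ℝ 1 (fderiv ℝ f) x := hf.fderiv_right (m := 1) (by norm_num)
    exact h1.differentiableAt one_ne_zero
  have key : ∀ z : E n, fderiv ℝ (fun y => fderiv ℝ f y z) x =
      (fderiv ℝ (fderiv ℝ f) x).flip z := by
    intro z
    have h2 := fderiv_clm_apply (c := fderiv ℝ f) (u := fun _ => z) hdiff
      (differentiableAt_const z)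
    simpa using h2
  rw [key v, key w]
  exact hsymm w v

lemma lap_D {u : E n → ℂ} {s : Set (E n)} {x : E n} (hs : IsOpen s) (hx : x ∈ s)
    (hu : ContDiffOn ℝ 3 u s) (v : E n) :
    lap (fun y => fderiv ℝ u y v) x = fderiv ℝ (lap u) x v := by
  have hu2 : ∀ y ∈ s, ContDiffAt ℝ 2 u y := fun y hy =>
    (hu.contDiffAt (hs.mem_nhds hy)).of_le (by norm_num)
  have hu3 : ContDiffOn ℝ (2 + 1 : ℕ) u s := by exact_mod_cast hu
  have hDiu : ∀ w : E n, ContDiffOn ℝ 2 (fun y => fderiv ℝ u y w) s := fun w => by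
    exact_mod_cast contDiffOn_D (m := 2) hs hu3 w
  have step : ∀ i : Fin n,
      fderiv ℝ (fun y => fderiv ℝ (fun z => fderiv ℝ u z v) y (EuclideanSpace.single i 1)) x
          (EuclideanSpace.single i 1)
        = fderiv ℝ (fun y => fderiv ℝ (fun z => fderiv ℝ u z (EuclideanSpace.single i 1)) y
            (EuclideanSpace.single i 1)) x v := by
    intro i
    have h1 : (fun y => fderiv ℝ (fun z => fderiv ℝ u z v) y (EuclideanSpace.single i 1))
        =ᶠ[𝓝 x]
        (fun y => fderiv ℝ (fun z => fderiv ℝ u z (EuclideanSpace.single i 1)) y v) := by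
      filter_upwards [hs.mem_nhds hx] with y hy
      exact D_comm (hu2 y hy) v (EuclideanSpace.single i 1)
    rw [h1.fderiv_eq]
    exact D_comm ((hDiu (EuclideanSpace.single i 1)).contDiffAt (hs.mem_nhds hx)) v
      (EuclideanSpace.single i 1)
  have hsum : fderiv ℝ (lap u) x = ∑ i : Fin n,
      fderiv ℝ (fun y => fderiv ℝ (fun z => fderiv ℝ u z (EuclideanSpace.single i 1)) y
        (EuclideanSpace.single i 1)) x := by
    unfold lap
    rw [fderiv_fun_sum]
    intro i _
    have h2 : ContDiffOn ℝ (0 + 2 : ℕ) (fun y => fderiv ℝ u y (EuclideanSpace.single i 1)) s := by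
      exact_mod_cast hDiu (EuclideanSpace.single i 1)
    exact diffAt_D (m := 0) hs hx h2 (EuclideanSpace.single i 1)
  rw [hsum, ContinuousLinearMap.sum_apply]
  unfold lap
  exact Finset.sum_congr rfl fun i _ => step i

def coordC (n : ℕ) (k : Fin n) : E n →L[ℝ] ℂ :=
  Complex.ofRealCLM.comp (EuclideanSpace.proj k)

lemma coordC_apply (k : Fin n) (x : E n) : coordC n k x = ((x k : ℝ) : ℂ) := rfl

lemma fderiv_coordC (k : Fin n) (x : E n) :
    fderiv ℝ (fun y : E n => ((y k : ℝ) : ℂ)) x = coordC n k :=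
  (coordC n k).fderiv

lemma lap_coordC (k : Fin n) (x : E n) : lap (fun y : E n => ((y k : ℝ) : ℂ)) x = 0 := by
  unfold lap
  refine Finset.sum_eq_zero fun i _ => ?_
  have h1 : (fun y : E n => fderiv ℝ (fun z : E n => ((z k : ℝ) : ℂ)) y
      (EuclideanSpace.single i 1)) = fun _ => coordC n k (EuclideanSpace.single i 1) := by
    funext y; rw [fderiv_coordC]
  rw [h1, fderiv_fun_const]
  simp

def psiF (n : ℕ) : E n → ℂ := fun x => 1 - ∑ j, ((x j : ℝ) : ℂ) ^ 2

lemma psiF_eq (x : E n) : ((1 - ‖x‖ ^ 2 : ℝ) : ℂ) = psiF n x := by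
  have h : ‖x‖ ^ 2 = ∑ j, (x j) ^ 2 := by
    rw [EuclideanSpace.norm_eq, Real.sq_sqrt (Finset.sum_nonneg fun j _ => sq_nonneg _)]
    simp [Real.norm_eq_abs, sq_abs]
  unfold psiF
  rw [h]
  push_cast
  ring

lemma hasFDerivAt_psiF (x : E n) :
    HasFDerivAt (psiF n) (-(∑ j, (2 * ((x j : ℝ) : ℂ)) • coordC n j)) x := by
  have h1 : ∀ j : Fin n, HasFDerivAt (fun y : E n => ((y j : ℝ) : ℂ) ^ 2)
      ((2 * ((x j : ℝ) : ℂ)) • coordC n j) x := by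
    intro j
    have hc : HasFDerivAt (fun y : E n => ((y j : ℝ) : ℂ)) (coordC n j) x :=
      (coordC n j).hasFDerivAt
    have h2 := hc.mul hc
    have h3 : ((x j : ℝ) : ℂ) • coordC n j + ((x j : ℝ) : ℂ) • coordC n j
        = (2 * ((x j : ℝ) : ℂ)) • coordC n j := by
      rw [two_mul]; exact (add_smul _ _ _).symm
    rw [h3] at h2
    simp only [pow_two]
    exact h2
  have hsum : HasFDerivAt (fun y : E n => ∑ j, ((y j : ℝ) : ℂ) ^ 2)
      (∑ j, (2 * ((x j : ℝ) : ℂ)) • coordC n j) x := HasFDerivAt.fun_sum fun j _ => h1 j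
  exact hsum.const_sub 1

lemma contDiff_psiF : ContDiff ℝ 2 (psiF n) := by
  unfold psiF
  refine ContDiff.sub contDiff_const (ContDiff.sum fun j _ => ?_)
  exact ((coordC n j).contDiff).pow 2

lemma fderiv_psiF (x : E n) :
    fderiv ℝ (psiF n) x = -(∑ j, (2 * ((x j : ℝ) : ℂ)) • coordC n j) :=
  (hasFDerivAt_psiF x).fderiv

lemma D_psiF (x : E n) (i : Fin n) :
    fderiv ℝ (psiF n) x (EuclideanSpace.single i 1) = -2 * ((x i : ℝ) : ℂ) := by
  rw [fderiv_psiF, ContinuousLinearMap.neg_apply, ContinuousLinearMap.sum_apply]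
  have h : ∀ j : Fin n, ((2 * ((x j : ℝ) : ℂ)) • coordC n j) (EuclideanSpace.single i 1)
      = if j = i then 2 * ((x j : ℝ) : ℂ) else 0 := by
    intro j
    rw [ContinuousLinearMap.smul_apply, coordC_apply]
    by_cases h0 : j = i <;> simp [h0, EuclideanSpace.single_apply, smul_eq_mul]
  rw [Finset.sum_congr rfl fun j _ => h j]
  simp

lemma cross_psiF (f : E n → ℂ) (x : E n) :
    ∑ i, fderiv ℝ (psiF n) x (EuclideanSpace.single i 1)
        * fderiv ℝ f x (EuclideanSpace.single i 1)
      = -2 * radialDeriv f x := by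
  unfold radialDeriv
  rw [clm_apply_eq_sum (fderiv ℝ f x) x, Finset.mul_sum]
  refine Finset.sum_congr rfl fun i _ => ?_
  rw [D_psiF]
  ring

lemma lap_psiF (x : E n) : lap (psiF n) x = -2 * (n : ℂ) := by
  have h1 : ∀ i : Fin n, (fun y => fderiv ℝ (psiF n) y (EuclideanSpace.single i 1))
      = fun y : E n => (-2 : ℂ) * ((y i : ℝ) : ℂ) := fun i => funext fun y => D_psiF y i
  have h2 : ∀ i : Fin n,
      fderiv ℝ (fun y => fderiv ℝ (psiF n) y (EuclideanSpace.single i 1)) x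
        (EuclideanSpace.single i 1) = -2 := by
    intro i
    rw [h1 i]
    have hc : HasFDerivAt (fun y : E n => (-2 : ℂ) * ((y i : ℝ) : ℂ))
        ((-2 : ℂ) • coordC n i) x := ((coordC n i).hasFDerivAt).const_mul (-2)
    rw [hc.fderiv]
    simp [ContinuousLinearMap.smul_apply, coordC_apply, EuclideanSpace.single_apply,
      smul_eq_mul]
  unfold lap
  rw [Finset.sum_congr rfl fun i _ => h2 i]
  simp [Finset.sum_const, Finset.card_univ]
  ring

lemma lap_radial {u : E n → ℂ} {s : Set (E n)} {x : E n} (hs : IsOpen s) (hx : x ∈ s)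
    (hu : ContDiffOn ℝ 3 u s) :
    lap (radialDeriv u) x = 2 * lap u x + radialDeriv (lap u) x := by
  have hu3 : ContDiffOn ℝ (2 + 1 : ℕ) u s := by exact_mod_cast hu
  have hD : ∀ k : Fin n, ContDiffOn ℝ 2
      (fun y => fderiv ℝ u y (EuclideanSpace.single k 1)) s :=
    fun k => by exact_mod_cast contDiffOn_D (m := 2) hs hu3 _
  have hcoord : ∀ k : Fin n, ContDiffOn ℝ 2 (fun y : E n => ((y k : ℝ) : ℂ)) s :=
    fun k => (coordC n k).contDiff.contDiffOn
  have hrd : radialDeriv u = fun y => ∑ k, ((y k : ℝ) : ℂ)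
      * fderiv ℝ u y (EuclideanSpace.single k 1) := by
    funext y; exact clm_apply_eq_sum (fderiv ℝ u y) y
  rw [hrd, lap_sum hs hx fun k _ => (hcoord k).mul (hD k)]
  have hterm : ∀ k : Fin n,
      lap (fun y => ((y k : ℝ) : ℂ) * fderiv ℝ u y (EuclideanSpace.single k 1)) x
      = ((x k : ℝ) : ℂ) * fderiv ℝ (lap u) x (EuclideanSpace.single k 1)
        + 2 * fderiv ℝ (fun y => fderiv ℝ u y (EuclideanSpace.single k 1)) x
            (EuclideanSpace.single k 1) := by
    intro k
    rw [lap_mul hs hx (hcoord k) (hD k), lap_coordC, lap_D hs hx hu]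
    have hcross : ∑ i, fderiv ℝ (fun y : E n => ((y k : ℝ) : ℂ)) x (EuclideanSpace.single i 1)
        * fderiv ℝ (fun y => fderiv ℝ u y (EuclideanSpace.single k 1)) x
            (EuclideanSpace.single i 1)
        = fderiv ℝ (fun y => fderiv ℝ u y (EuclideanSpace.single k 1)) x
            (EuclideanSpace.single k 1) := by
      have h1 : ∀ i : Fin n, fderiv ℝ (fun y : E n => ((y k : ℝ) : ℂ)) x
          (EuclideanSpace.single i 1) = if i = k then 1 else 0 := by
        intro i
        rw [fderiv_coordC, coordC_apply]
        by_cases h0 : i = k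
        · simp [h0, EuclideanSpace.single_apply]
        · simp [h0, EuclideanSpace.single_apply, Ne.symm h0]
      rw [Finset.sum_congr rfl fun i _ => by rw [h1 i]]
      simp
    rw [hcross]
    ring
  rw [Finset.sum_congr rfl fun k _ => hterm k]
  have hlapdef : lap u x = ∑ k, fderiv ℝ (fun y => fderiv ℝ u y (EuclideanSpace.single k 1)) x
      (EuclideanSpace.single k 1) := rfl
  have hraddef : radialDeriv (lap u) x
      = ∑ k, ((x k : ℝ) : ℂ) * fderiv ℝ (lap u) x (EuclideanSpace.single k 1) :=
    clm_apply_eq_sum (fderiv ℝ (lap u) x) x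
  rw [hlapdef, hraddef, Finset.sum_add_distrib, Finset.mul_sum]
  ring

lemma key {s : Set (E n)} (hs : IsOpen s) (θ : ℝ) (u : E n → ℂ)
    (hu : ContDiffOn ℝ 4 u s) {x : E n} (hx : x ∈ s) :
    lap (Lop θ u) x = Lop (θ - 1) (lap u) x := by
  have hu4 : ContDiffOn ℝ (2 + 2 : ℕ) u s := by exact_mod_cast hu
  have hu3 : ContDiffOn ℝ 3 u s := hu.of_le (by exact_mod_cast (by norm_num : (3:ℕ) ≤ 4))
  have hu2 : ContDiffOn ℝ 2 u s := hu.of_le (by exact_mod_cast (by norm_num : (2:ℕ) ≤ 4))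
  have hu31 : ContDiffOn ℝ (2 + 1 : ℕ) u s := by exact_mod_cast hu3
  have hlap2 : ContDiffOn ℝ 2 (lap u) s := by
    exact_mod_cast contDiffOn_lap (m := 2) hs hu4
  have hrad2 : ContDiffOn ℝ 2 (radialDeriv u) s := by
    exact_mod_cast contDiffOn_radial (m := 2) hs hu31
  have hpsi2 : ContDiffOn ℝ 2 (psiF n) s := contDiff_psiF.contDiffOn
  set c1 : ℂ := ((4 * θ : ℝ) : ℂ) with hc1
  set c2 : ℂ := ((2 * θ * ((n : ℝ) - 2 - 2 * θ) : ℝ) : ℂ) with hc2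
  have hL : Lop θ u = fun y => psiF n y * lap u y
      + (c1 * radialDeriv u y + c2 * u y) := by
    funext y
    unfold Lop
    rw [psiF_eq]
    ring
  rw [hL]
  rw [lap_add hs hx (hpsi2.mul hlap2)
    ((contDiffOn_const.mul hrad2).add (contDiffOn_const.mul hu2))]
  rw [lap_add hs hx (contDiffOn_const.mul hrad2) (contDiffOn_const.mul hu2)]
  rw [lap_mul hs hx hpsi2 hlap2]
  rw [lap_const_mul c1 hs hx hrad2, lap_const_mul c2 hs hx hu2]
  rw [cross_psiF (lap u) x, lap_psiF, lap_radial hs hx hu3]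
  unfold Lop
  rw [psiF_eq]
  rw [hc1, hc2]
  push_cast
  ring

lemma contDiffOn_lapIter {s : Set (E n)} (hs : IsOpen s) (m : ℕ) (j : ℕ) {u : E n → ℂ}
    (hu : ContDiffOn ℝ (m + 2 * j : ℕ) u s) : ContDiffOn ℝ m (lapIter j u) s := by
  induction j generalizing u with
  | zero => simpa [lapIter] using hu
  | succ j ih =>
    have e : (m + 2 * (j + 1) : ℕ) = (m + 2 * j) + 2 := by ring
    rw [e] at hu
    have h2 := contDiffOn_lap (m := m + 2 * j) hs hu
    have h3 : lapIter (j + 1) u = lapIter j (lap u) := by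
      unfold lapIter; rw [Function.iterate_succ_apply]
    rw [h3]
    exact ih h2

end S6
end

/-- `Δ L_θ = L_{θ-1} Δ` and more generally `Δ^j L_θ = L_{θ-j} Δ^j`. -/
theorem stmt6 (n : ℕ) (hn : 2 ≤ n) (θ : ℝ) :
    (∀ u : E n → ℂ, ContDiffOn ℝ 4 u (unitBall n) →
      ∀ x ∈ unitBall n, lap (Lop θ u) x = Lop (θ - 1) (lap u) x) ∧
    (∀ j : ℕ, 1 ≤ j → ∀ u : E n → ℂ, ContDiffOn ℝ (2 * j + 2 : ℕ) u (unitBall n) →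
      ∀ x ∈ unitBall n, lapIter j (Lop θ u) x = Lop (θ - (j : ℝ)) (lapIter j u) x) := by
  have hs : IsOpen (unitBall n) := Metric.isOpen_ball
  constructor
  · exact fun u hu x hx => S6.key hs θ u hu hx
  · intro j hj
    induction j with
    | zero => omega
    | succ j ih =>
      intro u hu x hx
      rcases Nat.eq_zero_or_pos j with h0 | hpos
      · subst h0
        have h4 : ContDiffOn ℝ 4 u (unitBall n) := by
          have : (2 * 1 + 2 : ℕ) = 4 := by norm_num
          rw [this] at hu
          exact_mod_cast hu
        have hk := S6.key hs θ u h4 hx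
        have e1 : lapIter 1 (Lop θ u) x = lap (Lop θ u) x := by
          unfold lapIter; rw [Function.iterate_one]
        have e2 : lapIter 1 u = lap u := by
          unfold lapIter; rw [Function.iterate_one]
        rw [e1, e2, hk]
        norm_num
      · have hu' : ContDiffOn ℝ (2 * j + 2 : ℕ) u (unitBall n) := by
          refine hu.of_le ?_
          exact_mod_cast (by omega : (2 * j + 2 : ℕ) ≤ 2 * (j + 1) + 2)
        have hIH := ih hpos u hu'
        have hv4 : ContDiffOn ℝ 4 (lapIter j u) (unitBall n) := by
          have h5 : ContDiffOn ℝ (4 + 2 * j : ℕ) u (unitBall n) := by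
            have e : (2 * (j + 1) + 2 : ℕ) = 4 + 2 * j := by ring
            rw [e] at hu
            exact hu
          exact_mod_cast S6.contDiffOn_lapIter hs 4 j h5
        have e1 : lapIter (j + 1) (Lop θ u) x = lap (lapIter j (Lop θ u)) x := by
          unfold lapIter; rw [Function.iterate_succ_apply']
        have e2 : lap (lapIter j (Lop θ u)) x = lap (Lop (θ - (j : ℝ)) (lapIter j u)) x := by
          apply S6.lap_congr_nhds
          filter_upwards [hs.mem_nhds hx] with y hy
          exact hIH y hy
        have e3 := S6.key hs (θ - (j : ℝ)) (lapIter j u) hv4 hx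
        have e4 : lap (lapIter j u) = lapIter (j + 1) u := by
          funext y
          unfold lapIter
          rw [Function.iterate_succ_apply']
        rw [e1, e2, e3, e4]
        have e5 : θ - (j : ℝ) - 1 = θ - ((j + 1 : ℕ) : ℝ) := by push_cast; ring
        rw [e5]
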